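/- Let N, d ≥ 1, let ν_I : (ZMod N)^I → ℝ for I ⊊ {1,…,d} be nonnegative weights, let ν_{[d]} : (ZMod N)^d → ℝ be nonnegative, and let Ω ⊆ (ZMod N)^d have face structure. Assume that ⟨f, Df⟩_ν > 0 for every f ∈ F_T that is not identically zero. Then ‖·‖_BAC is a norm on F_T: it is nonnegative, strictly positive on nonzero elements of F_T, satisfies ‖λf‖_BAC = |λ|·‖f‖_BAC for all λ ∈ ℝ, and satisfies the triangle inequality. Moreover ‖f‖_BAC = ‖f·1_Ω‖_BAC for every f : (ZMod N)^d → ℝ. -/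

import Mathlib

noncomputable section
open Finset Pointwise

/-- `P_ω(x,y)`: the point whose `i`-th coordinate is `x i` if `ω i = false` and `y i` otherwise. -/
def proj {ι : Type*} {N : ℕ} (ω : ι → Bool) (x y : ι → ZMod N) : ι → ZMod N :=
  fun i => if ω i then y i else x i

/-- `P_{ω_I}(x_I, y_I)` as a function on the subtype `↥I`. -/
def projI {ι : Type*} {N : ℕ} {I : Finset ι} (ω : I → Bool) (x y : ι → ZMod N) :
    I → ZMod N :=
  fun i => if ω i then y i.1 else x i.1

/-- The weighted inner product `⟨f,g⟩_ν`. -/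
def wInner {ι : Type*} [Fintype ι] [DecidableEq ι] {N : ℕ} [NeZero N]
    (ν : (I : Finset ι) → (I → ZMod N) → ℝ) (f g : (ι → ZMod N) → ℝ) : ℝ :=
  Finset.expect Finset.univ fun x : ι → ZMod N =>
    f x * g x * ∏ I ∈ univ.filter (fun I : Finset ι => I ≠ univ), ν I (fun i => x i.1)

/-- The dual function `Df`. -/
def dualFn {ι : Type*} [Fintype ι] [DecidableEq ι] {N : ℕ} [NeZero N]
    (ν : (I : Finset ι) → (I → ZMod N) → ℝ) (f : (ι → ZMod N) → ℝ)
    (x : ι → ZMod N) : ℝ :=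
  Finset.expect Finset.univ fun y : ι → ZMod N =>
    (∏ ω ∈ univ.filter (fun ω : ι → Bool => ω ≠ fun _ => false), f (proj ω x y)) *
      ∏ I ∈ univ.filter (fun I : Finset ι => I ≠ univ),
        ∏ ω ∈ univ.filter (fun ω : I → Bool => ω ≠ fun _ => false), ν I (projI ω x y)

/-- A set `Ω` has face structure if it is the intersection of sets `Ω_J` over `∅ ≠ J ⊊ ι`,
where membership in `Ω_J` depends only on the coordinates outside of `J`. -/
def HasFaceStructure {ι : Type*} [Fintype ι] [DecidableEq ι] {N : ℕ}
    (Ω : Set (ι → ZMod N)) : Prop :=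
  ∃ ΩJ : Finset ι → Set (ι → ZMod N),
    (∀ J : Finset ι, J ≠ ∅ → J ≠ univ →
      ∀ x y : ι → ZMod N, (∀ i, i ∉ J → x i = y i) → (x ∈ ΩJ J → y ∈ ΩJ J)) ∧
    Ω = ⋂ J ∈ {J : Finset ι | J ≠ ∅ ∧ J ≠ univ}, ΩJ J

/-- `F_T`: functions supported on `Ω`. -/
def FT {ι : Type*} {N : ℕ} (Ω : Set (ι → ZMod N)) : Set ((ι → ZMod N) → ℝ) :=
  {f | ∀ x, x ∉ Ω → f x = 0}

/-- `S_T`: functions supported on `Ω` and dominated by `ν_{[d]} + 2`. -/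
def STset {ι : Type*} {N : ℕ} (Ω : Set (ι → ZMod N)) (νd : (ι → ZMod N) → ℝ) :
    Set ((ι → ZMod N) → ℝ) :=
  {f | f ∈ FT Ω ∧ ∀ x, |f x| ≤ νd x + 2}

/-- The basic anti-correlation norm `‖f‖_BAC = max_{g ∈ S_T} |⟨f, Dg⟩_ν|`. -/
def BACnorm {ι : Type*} [Fintype ι] [DecidableEq ι] {N : ℕ} [NeZero N]
    (ν : (I : Finset ι) → (I → ZMod N) → ℝ) (Ω : Set (ι → ZMod N))
    (νd : (ι → ZMod N) → ℝ) (f : (ι → ZMod N) → ℝ) : ℝ :=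
  sSup ((fun g => |wInner ν f (dualFn ν g)|) '' STset Ω νd)

section Aux

variable {ι : Type*} [Fintype ι] [DecidableEq ι] {N : ℕ} [NeZero N]
  (ν : (I : Finset ι) → (I → ZMod N) → ℝ)

lemma wInner_add (f g h : (ι → ZMod N) → ℝ) :
    wInner ν (f + g) h = wInner ν f h + wInner ν g h := by
  unfold wInner
  rw [← Finset.expect_add_distrib]
  exact Finset.expect_congr rfl fun x _ => by simp [Pi.add_apply]; ring

lemma wInner_smul_left (c : ℝ) (f h : (ι → ZMod N) → ℝ) :
    wInner ν (fun x => c * f x) h = c * wInner ν f h := by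
  unfold wInner
  rw [Finset.mul_expect]
  exact Finset.expect_congr rfl fun x _ => by ring

lemma wInner_smul_right (c : ℝ) (f h : (ι → ZMod N) → ℝ) :
    wInner ν f (fun x => c * h x) = c * wInner ν f h := by
  unfold wInner
  rw [Finset.mul_expect]
  exact Finset.expect_congr rfl fun x _ => by ring

lemma dualFn_smul (c : ℝ) (g : (ι → ZMod N) → ℝ) (x : ι → ZMod N) :
    dualFn ν (fun z => c * g z) x
      = c ^ (univ.filter (fun ω : ι → Bool => ω ≠ fun _ => false)).card * dualFn ν g x := by
  unfold dualFn
  rw [Finset.mul_expect]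
  refine Finset.expect_congr rfl fun y _ => ?_
  rw [Finset.prod_mul_distrib, Finset.prod_const]
  ring

/-- The pointwise bound on dual functions of elements of `S_T`. -/
def dualBound (νd : (ι → ZMod N) → ℝ) (x : ι → ZMod N) : ℝ :=
  Finset.expect Finset.univ fun y : ι → ZMod N =>
    (∏ ω ∈ univ.filter (fun ω : ι → Bool => ω ≠ fun _ => false), (νd (proj ω x y) + 2)) *
      ∏ I ∈ univ.filter (fun I : Finset ι => I ≠ univ),
        ∏ ω ∈ univ.filter (fun ω : I → Bool => ω ≠ fun _ => false), ν I (projI ω x y)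

lemma abs_dualFn_le (hν : ∀ I : Finset ι, I ≠ univ → ∀ z, 0 ≤ ν I z)
    (νd : (ι → ZMod N) → ℝ) (g : (ι → ZMod N) → ℝ) (hg : ∀ x, |g x| ≤ νd x + 2)
    (x : ι → ZMod N) : |dualFn ν g x| ≤ dualBound ν νd x := by
  refine (Finset.abs_expect_le _ _).trans (Finset.expect_le_expect fun y _ => ?_)
  have hQ : 0 ≤ ∏ I ∈ univ.filter (fun I : Finset ι => I ≠ univ),
      ∏ ω ∈ univ.filter (fun ω : I → Bool => ω ≠ fun _ => false), ν I (projI ω x y) := by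
    refine Finset.prod_nonneg fun I hI => Finset.prod_nonneg fun ω _ => ?_
    exact hν I (Finset.mem_filter.1 hI).2 _
  rw [abs_mul, Finset.abs_prod, abs_of_nonneg hQ]
  refine mul_le_mul_of_nonneg_right ?_ hQ
  exact Finset.prod_le_prod (fun ω _ => abs_nonneg _) fun ω _ => hg _

lemma abs_wInner_dualFn_le (hν : ∀ I : Finset ι, I ≠ univ → ∀ z, 0 ≤ ν I z)
    (νd : (ι → ZMod N) → ℝ) (f g : (ι → ZMod N) → ℝ) (hg : ∀ x, |g x| ≤ νd x + 2) :
    |wInner ν f (dualFn ν g)|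
      ≤ Finset.expect Finset.univ (fun x : ι → ZMod N => |f x| * dualBound ν νd x *
          ∏ I ∈ univ.filter (fun I : Finset ι => I ≠ univ), ν I (fun i => x i.1)) := by
  refine (Finset.abs_expect_le _ _).trans (Finset.expect_le_expect fun x _ => ?_)
  have hP : 0 ≤ ∏ I ∈ univ.filter (fun I : Finset ι => I ≠ univ), ν I (fun i => x i.1) :=
    Finset.prod_nonneg fun I hI => hν I (Finset.mem_filter.1 hI).2 _
  rw [abs_mul, abs_mul, abs_of_nonneg hP]
  refine mul_le_mul_of_nonneg_right ?_ hP
  exact mul_le_mul_of_nonneg_left (abs_dualFn_le ν hν νd g hg x) (abs_nonneg _)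

lemma bddAbove_BAC (hν : ∀ I : Finset ι, I ≠ univ → ∀ z, 0 ≤ ν I z)
    (Ω : Set (ι → ZMod N)) (νd : (ι → ZMod N) → ℝ) (f : (ι → ZMod N) → ℝ) :
    BddAbove ((fun g => |wInner ν f (dualFn ν g)|) '' STset Ω νd) := by
  refine ⟨Finset.expect Finset.univ (fun x : ι → ZMod N => |f x| * dualBound ν νd x *
      ∏ I ∈ univ.filter (fun I : Finset ι => I ≠ univ), ν I (fun i => x i.1)), ?_⟩
  rintro r ⟨g, hg, rfl⟩
  exact abs_wInner_dualFn_le ν hν νd f g hg.2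

lemma zero_mem_STset (Ω : Set (ι → ZMod N)) (νd : (ι → ZMod N) → ℝ)
    (hνd : ∀ x, 0 ≤ νd x) : (0 : (ι → ZMod N) → ℝ) ∈ STset Ω νd := by
  refine ⟨fun x _ => rfl, fun x => ?_⟩
  simp only [Pi.zero_apply, abs_zero]
  linarith [hνd x]

lemma dualFn_zero [Nonempty ι] (x : ι → ZMod N) :
    dualFn ν (0 : (ι → ZMod N) → ℝ) x = 0 := by
  refine Finset.expect_eq_zero fun y _ => ?_
  have hm : (fun _ : ι => true) ∈ univ.filter (fun ω : ι → Bool => ω ≠ fun _ => false) := by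
    refine Finset.mem_filter.2 ⟨Finset.mem_univ _, ?_⟩
    intro h
    have := congrFun h (Classical.arbitrary ι)
    simp at this
  rw [Finset.prod_eq_zero hm rfl, zero_mul]

lemma wInner_zero_right (f : (ι → ZMod N) → ℝ) (h : (ι → ZMod N) → ℝ)
    (hh : ∀ x, h x = 0) : wInner ν f h = 0 :=
  Finset.expect_eq_zero fun x _ => by rw [hh x]; ring

lemma dualFn_support (Ω : Set (ι → ZMod N)) (hΩ : HasFaceStructure Ω)
    (g : (ι → ZMod N) → ℝ) (hg : g ∈ FT Ω) (x : ι → ZMod N) (hx : x ∉ Ω) :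
    dualFn ν g x = 0 := by
  classical
  obtain ⟨ΩJ, hdep, hΩeq⟩ := hΩ
  rw [hΩeq] at hx
  have hx' : ¬ ∀ J ∈ {J : Finset ι | J ≠ ∅ ∧ J ≠ univ}, x ∈ ΩJ J := by
    intro h; exact hx (Set.mem_iInter₂.2 h)
  push_neg at hx'
  obtain ⟨J, hJS, hxJ⟩ := hx'
  obtain ⟨hJ0, hJu⟩ := hJS
  set ω₀ : ι → Bool := fun i => decide (i ∈ J) with hω₀
  have hω₀ne : ω₀ ≠ fun _ => false := by
    obtain ⟨j, hj⟩ := hJ0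
    intro h
    have := congrFun h j
    simp [hω₀, hj] at this
  refine Finset.expect_eq_zero fun y _ => ?_
  have hm : ω₀ ∈ univ.filter (fun ω : ι → Bool => ω ≠ fun _ => false) :=
    Finset.mem_filter.2 ⟨Finset.mem_univ _, hω₀ne⟩
  have hz : g (proj ω₀ x y) = 0 := by
    apply hg
    intro hmem
    rw [hΩeq] at hmem
    have hmemJ : proj ω₀ x y ∈ ΩJ J := Set.mem_iInter₂.1 hmem J ⟨hJ0.ne_empty, hJu⟩
    refine hxJ (hdep J hJ0.ne_empty hJu _ x (fun i hi => ?_) hmemJ)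
    simp [proj, hω₀, hi]
  rw [Finset.prod_eq_zero hm hz, zero_mul]

end Aux

/-- The BAC norm is a norm on `F_T`, and `‖f‖_BAC = ‖f·1_Ω‖_BAC`. -/
theorem BACnorm_is_norm (N d : ℕ) [NeZero N] (hd : 1 ≤ d)
    (ν : (I : Finset (Fin d)) → (I → ZMod N) → ℝ)
    (hν : ∀ I : Finset (Fin d), I ≠ univ → ∀ z, 0 ≤ ν I z)
    (νd : (Fin d → ZMod N) → ℝ) (hνd : ∀ x, 0 ≤ νd x)
    (Ω : Set (Fin d → ZMod N)) (hΩ : HasFaceStructure Ω)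
    (hpos : ∀ f ∈ FT Ω, f ≠ 0 → 0 < wInner ν f (dualFn ν f)) :
    (∀ f : (Fin d → ZMod N) → ℝ, 0 ≤ BACnorm ν Ω νd f) ∧
    (∀ f ∈ FT Ω, f ≠ 0 → 0 < BACnorm ν Ω νd f) ∧
    (∀ (lam : ℝ), ∀ f ∈ FT Ω,
      BACnorm ν Ω νd (fun x => lam * f x) = |lam| * BACnorm ν Ω νd f) ∧
    (∀ f ∈ FT Ω, ∀ g ∈ FT Ω,
      BACnorm ν Ω νd (f + g) ≤ BACnorm ν Ω νd f + BACnorm ν Ω νd g) ∧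
    (∀ f : (Fin d → ZMod N) → ℝ, BACnorm ν Ω νd f = BACnorm ν Ω νd (Ω.indicator f)) := by
  haveI : Nonempty (Fin d) := ⟨⟨0, hd⟩⟩
  -- zero is in every image set, with value 0
  have hzero : ∀ f : (Fin d → ZMod N) → ℝ,
      (0 : ℝ) ∈ (fun g => |wInner ν f (dualFn ν g)|) '' STset Ω νd := by
    intro f
    refine ⟨0, zero_mem_STset Ω νd hνd, ?_⟩
    show |wInner ν f (dualFn ν 0)| = 0
    rw [wInner_zero_right ν f _ (dualFn_zero ν), abs_zero]
  have hne : ∀ f : (Fin d → ZMod N) → ℝ,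
      ((fun g => |wInner ν f (dualFn ν g)|) '' STset Ω νd).Nonempty :=
    fun f => ⟨0, hzero f⟩
  have hbdd := fun f => bddAbove_BAC ν hν Ω νd f
  have hnonneg : ∀ f : (Fin d → ZMod N) → ℝ, 0 ≤ BACnorm ν Ω νd f :=
    fun f => le_csSup (hbdd f) (hzero f)
  refine ⟨hnonneg, ?_, ?_, ?_, ?_⟩
  · -- positivity
    intro f hf hf0
    set M : ℝ := ∑ x : Fin d → ZMod N, |f x| with hM
    have hM0 : 0 ≤ M := Finset.sum_nonneg fun x _ => abs_nonneg _
    set ε : ℝ := (1 + M)⁻¹ with hε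
    have h1M : (0:ℝ) < 1 + M := by linarith
    have hε0 : 0 < ε := inv_pos.2 h1M
    have hgmem : (fun x => ε * f x) ∈ STset Ω νd := by
      refine ⟨fun x hx => by show ε * f x = 0; rw [hf x hx, mul_zero], fun x => ?_⟩
      have hfx : |f x| ≤ M := Finset.single_le_sum (fun y _ => abs_nonneg (f y)) (mem_univ x)
      have : |ε * f x| ≤ ε * (1 + M) := by
        rw [abs_mul, abs_of_pos hε0]
        have : |f x| ≤ 1 + M := by linarith
        exact mul_le_mul_of_nonneg_left this hε0.le
      rw [inv_mul_cancel₀ h1M.ne'] at this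
      linarith [hνd x]
    have hval : |wInner ν f (dualFn ν fun x => ε * f x)|
        = ε ^ (univ.filter (fun ω : Fin d → Bool => ω ≠ fun _ => false)).card *
            wInner ν f (dualFn ν f) := by
      have hdf : dualFn ν (fun x => ε * f x)
          = fun x => ε ^ (univ.filter (fun ω : Fin d → Bool => ω ≠ fun _ => false)).card *
              dualFn ν f x := funext fun x => dualFn_smul ν ε f x
      rw [hdf, wInner_smul_right, abs_mul, abs_of_pos (pow_pos hε0 _),
        abs_of_pos (hpos f hf hf0)]
    have hvpos : 0 < |wInner ν f (dualFn ν fun x => ε * f x)| := by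
      rw [hval]; exact mul_pos (pow_pos hε0 _) (hpos f hf hf0)
    exact hvpos.trans_le (le_csSup (hbdd f) ⟨_, hgmem, rfl⟩)
  · -- homogeneity
    intro lam f _hf
    have himg : (fun g => |wInner ν (fun x => lam * f x) (dualFn ν g)|) '' STset Ω νd
        = |lam| • ((fun g => |wInner ν f (dualFn ν g)|) '' STset Ω νd) := by
      rw [← Set.image_smul, ← Set.image_comp]
      refine Set.image_congr fun g _ => ?_
      simp only [Function.comp_apply, smul_eq_mul]
      rw [wInner_smul_left, abs_mul]
    unfold BACnorm
    rw [himg, Real.sSup_smul_of_nonneg (abs_nonneg lam), smul_eq_mul]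
  · -- triangle inequality
    intro f _hf g _hg
    refine csSup_le (hne (f + g)) ?_
    rintro r ⟨h, hh, rfl⟩
    show |wInner ν (f + g) (dualFn ν h)| ≤ _
    rw [wInner_add]
    calc |wInner ν f (dualFn ν h) + wInner ν g (dualFn ν h)|
        ≤ |wInner ν f (dualFn ν h)| + |wInner ν g (dualFn ν h)| := abs_add_le _ _
      _ ≤ BACnorm ν Ω νd f + BACnorm ν Ω νd g :=
          add_le_add (le_csSup (hbdd f) ⟨h, hh, rfl⟩) (le_csSup (hbdd g) ⟨h, hh, rfl⟩)
  · -- restriction to Ω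
    intro f
    unfold BACnorm
    congr 1
    refine Set.image_congr fun g hg => ?_
    congr 1
    refine Finset.expect_congr rfl fun x _ => ?_
    by_cases hx : x ∈ Ω
    · rw [Set.indicator_of_mem hx]
    · rw [dualFn_support ν Ω hΩ g hg.1 x hx, Set.indicator_of_notMem hx]
      ring

end
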